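/- Let a, b, c ∈ ℝ with b ≠ 0, a/b > (c/(2b))² + 2, and either a > b > 0 or a < b < 0. Then z = 0 is the only real root of the cubic f₁(z) = b z³ − c z² + (a − 2b) z, and β₂(0)·β₃(0) = (a − b)(2b − a) < 0, i.e. the unique root is of saddle type (Darbouxian type D₁). -/
import Mathlib


noncomputable section

/-- The cubic `f₁(z) = b z³ − c z² + (a − 2b) z`. -/
def cubicF (a b c z : ℝ) : ℝ := b * z ^ 3 - c * z ^ 2 + (a - 2 * b) * z

/-- `β₂(z) = 2b z² − c z + (a − b)`. -/
def beta2 (a b c z : ℝ) : ℝ := 2 * b * z ^ 2 - c * z + (a - b)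

/-- `β₃(z) = −3b z² + 2c z + (2b − a)`. -/
def beta3 (a b c z : ℝ) : ℝ := -3 * b * z ^ 2 + 2 * c * z + (2 * b - a)

theorem stmt0 (a b c : ℝ) (hb : b ≠ 0)
    (h1 : a / b > (c / (2 * b)) ^ 2 + 2)
    (h2 : (b < a ∧ 0 < b) ∨ (a < b ∧ b < 0)) :
    (∀ z : ℝ, cubicF a b c z = 0 ↔ z = 0) ∧
    beta2 a b c 0 * beta3 a b c 0 = (a - b) * (2 * b - a) ∧
    (a - b) * (2 * b - a) < 0 := by
  have hb2 : (0:ℝ) < b ^ 2 := by positivity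
  have h1' : 4 * a * b > c ^ 2 + 8 * b ^ 2 := by
    rw [gt_iff_lt, ← sub_pos] at h1
    have key : (a / b - ((c / (2 * b)) ^ 2 + 2)) * (4 * b ^ 2)
        = 4 * a * b - (c ^ 2 + 8 * b ^ 2) := by
      field_simp; ring
    nlinarith [mul_pos h1 (show (0:ℝ) < 4 * b ^ 2 by positivity)]
  refine ⟨?_, ?_, ?_⟩
  · intro z
    constructor
    · intro hz
      by_contra hz0
      have hq : b * (b * z ^ 2 - c * z + (a - 2 * b)) > 0 := by
        nlinarith [sq_nonneg (2 * b * z - c)]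
      have hq0 : b * z ^ 2 - c * z + (a - 2 * b) ≠ 0 := by
        intro h; rw [h, mul_zero] at hq; exact lt_irrefl 0 hq
      apply hq0
      have : z * (b * z ^ 2 - c * z + (a - 2 * b)) = 0 := by
        unfold cubicF at hz; ring_nf; ring_nf at hz; linarith
      rcases mul_eq_zero.mp this with h | h
      · exact absurd h hz0
      · exact h
    · intro hz; simp [cubicF, hz]
  · simp [beta2, beta3]
  · rcases h2 with ⟨hab, hb0⟩ | ⟨hab, hb0⟩
    · have : a > 2 * b := by nlinarith
      nlinarith
    · have : a < 2 * b := by nlinarith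
      nlinarith
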